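/- Let G be an infinite, locally finite, strongly connected, quasi-transitive, unimodular directed graph. Then μ = μ^F = μ^B = μ^{FB}, i.e., the connective constants for all SAWs, forward extendable, backward extendable, and doubly extendable SAWs coincide. -/

import Mathlib

open Filter ENNReal

structure Dgraph where
  V : Type
  E : Type
  src : E → V
  tgt : E → V

namespace Dgraph

variable (G : Dgraph)

/-- Every vertex has finite in-degree and out-degree. -/
def LocallyFinite : Prop :=
  ∀ v : G.V, {e : G.E | G.src e = v}.Finite ∧ {e : G.E | G.tgt e = v}.Finite

/-- There is a directed edge from `u` to `v`. -/
def Adj (u v : G.V) : Prop := ∃ e : G.E, G.src e = u ∧ G.tgt e = v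

/-- Directed walks exist between any ordered pair of vertices. -/
def StronglyConnected : Prop := ∀ u v : G.V, Relation.ReflTransGen G.Adj u v

/-- An automorphism of a directed multigraph. -/
structure Aut where
  vmap : G.V ≃ G.V
  emap : G.E ≃ G.E
  src_eq : ∀ e, G.src (emap e) = vmap (G.src e)
  tgt_eq : ∀ e, G.tgt (emap e) = vmap (G.tgt e)

/-- `u` and `v` are in the same transitivity class. -/
def SameOrbit (u v : G.V) : Prop := ∃ φ : G.Aut, φ.vmap u = v

/-- Finitely many transitivity classes. -/
def QuasiTransitive : Prop := ∃ S : Finset G.V, ∀ v : G.V, ∃ s ∈ S, G.SameOrbit s v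

def VertexTransitive : Prop := ∀ u v : G.V, G.SameOrbit u v

/-- The orbit of `v` under the stabiliser of `u`. -/
def stabOrbit (u v : G.V) : Set G.V := {w | ∃ φ : G.Aut, φ.vmap u = u ∧ φ.vmap v = w}

/-- Unimodularity: the weight function is constant on transitivity classes,
equivalently `|stab(u)v| = |stab(v)u|` whenever `u, v` are in the same orbit. -/
def Unimodular : Prop := ∀ u v : G.V, G.SameOrbit u v →
  Nat.card (G.stabOrbit u v) = Nat.card (G.stabOrbit v u)

/-- The edge-reversal of `G`. -/
def rev : Dgraph := ⟨G.V, G.E, G.tgt, G.src⟩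

/-- Each edge has a reverse edge: `G` represents an undirected graph. -/
def Undirected : Prop := ∃ ι : G.E ≃ G.E, ∀ e : G.E,
  G.src (ι e) = G.tgt e ∧ G.tgt (ι e) = G.src e ∧ ι (ι e) = e

/-- An `n`-step self-avoiding walk starting at `v`, directed away from `v`. -/
@[ext]
structure SAW (n : ℕ) (v : G.V) where
  vs : Fin (n + 1) → G.V
  es : Fin n → G.E
  hsrc : ∀ i : Fin n, G.src (es i) = vs i.castSucc
  htgt : ∀ i : Fin n, G.tgt (es i) = vs i.succ
  hstart : vs 0 = v
  hinj : Function.Injective vs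

/-- `w` is an initial segment of a singly infinite SAW from `v`. -/
def IsFwdExt {n : ℕ} {v : G.V} (w : G.SAW n v) : Prop :=
  ∃ (vs : ℕ → G.V) (es : ℕ → G.E), Function.Injective vs ∧
    (∀ i : ℕ, G.src (es i) = vs i ∧ G.tgt (es i) = vs (i + 1)) ∧
    (∀ i : Fin (n + 1), vs i = w.vs i) ∧ (∀ i : Fin n, es i = w.es i)

/-- `w` is the final segment of a singly infinite SAW from infinity ending at the
endpoint of `w` (indexed backwards from the endpoint). -/
def IsBwdExt {n : ℕ} {v : G.V} (w : G.SAW n v) : Prop :=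
  ∃ (vs : ℕ → G.V) (es : ℕ → G.E), Function.Injective vs ∧
    (∀ i : ℕ, G.src (es i) = vs (i + 1) ∧ G.tgt (es i) = vs i) ∧
    (∀ i : Fin (n + 1), vs (n - (i : ℕ)) = w.vs i) ∧
    (∀ i : Fin n, es (n - 1 - (i : ℕ)) = w.es i)

/-- `w` is a sub-walk of a doubly infinite SAW. -/
def IsDblExt {n : ℕ} {v : G.V} (w : G.SAW n v) : Prop :=
  ∃ (vs : ℤ → G.V) (es : ℤ → G.E), Function.Injective vs ∧
    (∀ i : ℤ, G.src (es i) = vs i ∧ G.tgt (es i) = vs (i + 1)) ∧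
    ∃ k : ℤ, (∀ i : Fin (n + 1), vs (k + (i : ℕ)) = w.vs i) ∧
      (∀ i : Fin n, es (k + (i : ℕ)) = w.es i)

noncomputable def sigma (n : ℕ) (v : G.V) : ℕ := Nat.card (G.SAW n v)
noncomputable def sigmaF (n : ℕ) (v : G.V) : ℕ := Nat.card {w : G.SAW n v // G.IsFwdExt w}
noncomputable def sigmaB (n : ℕ) (v : G.V) : ℕ := Nat.card {w : G.SAW n v // G.IsBwdExt w}
noncomputable def sigmaFB (n : ℕ) (v : G.V) : ℕ := Nat.card {w : G.SAW n v // G.IsDblExt w}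

noncomputable def ssigma (n : ℕ) : ℝ≥0∞ := ⨆ v : G.V, (G.sigma n v : ℝ≥0∞)
noncomputable def ssigmaF (n : ℕ) : ℝ≥0∞ := ⨆ v : G.V, (G.sigmaF n v : ℝ≥0∞)
noncomputable def ssigmaB (n : ℕ) : ℝ≥0∞ := ⨆ v : G.V, (G.sigmaB n v : ℝ≥0∞)
noncomputable def ssigmaFB (n : ℕ) : ℝ≥0∞ := ⨆ v : G.V, (G.sigmaFB n v : ℝ≥0∞)

/-- Undirected graph distance: length of a shortest path ignoring orientations. -/
noncomputable def udist (u v : G.V) : ℕ :=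
  sInf {n : ℕ | ∃ f : Fin (n + 1) → G.V, f 0 = u ∧ f (Fin.last n) = v ∧
    ∀ i : Fin n, (∃ e, G.src e = f i.castSucc ∧ G.tgt e = f i.succ) ∨
      (∃ e, G.src e = f i.succ ∧ G.tgt e = f i.castSucc)}

end Dgraph

open Filter ENNReal

namespace Dgraph

variable {G : Dgraph}

attribute [local instance] Classical.propDecidable

/-! ### Basic accessors with explicit `Fin.mk` indices -/

lemma SAW.src' {n : ℕ} {v : G.V} (w : G.SAW n v) (i : ℕ) (h : i < n) :
    G.src (w.es ⟨i, h⟩) = w.vs ⟨i, by omega⟩ := by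
  have := w.hsrc ⟨i, h⟩
  rwa [show (Fin.castSucc ⟨i, h⟩ : Fin (n+1)) = ⟨i, by omega⟩ from rfl] at this

lemma SAW.tgt' {n : ℕ} {v : G.V} (w : G.SAW n v) (i : ℕ) (h : i < n) :
    G.tgt (w.es ⟨i, h⟩) = w.vs ⟨i + 1, by omega⟩ := by
  have := w.htgt ⟨i, h⟩
  rwa [show (Fin.succ ⟨i, h⟩ : Fin (n+1)) = ⟨i + 1, by omega⟩ from rfl] at this

lemma SAW.start' {n : ℕ} {v : G.V} (w : G.SAW n v) :
    w.vs ⟨0, by omega⟩ = v := by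
  have := w.hstart
  rwa [show (0 : Fin (n+1)) = ⟨0, by omega⟩ from rfl] at this

lemma SAW.vs_congr {n : ℕ} {v : G.V} (w : G.SAW n v) {i j : ℕ} (h : i = j)
    (hi : i < n + 1) (hj : j < n + 1) : w.vs ⟨i, hi⟩ = w.vs ⟨j, hj⟩ := by subst h; rfl

lemma SAW.es_congr {n : ℕ} {v : G.V} (w : G.SAW n v) {i j : ℕ} (h : i = j)
    (hi : i < n) (hj : j < n) : w.es ⟨i, hi⟩ = w.es ⟨j, hj⟩ := by subst h; rfl

/-- The edges of a SAW determine its vertices. -/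
lemma SAW.ext_es {n : ℕ} {v : G.V} {w w' : G.SAW n v}
    (h : ∀ (i : ℕ) (hi : i < n), w.es ⟨i, hi⟩ = w'.es ⟨i, hi⟩) : w = w' := by
  have hvs : ∀ (j : ℕ) (hj : j < n + 1), w.vs ⟨j, hj⟩ = w'.vs ⟨j, hj⟩ := by
    intro j
    induction j with
    | zero => intro hj; rw [w.start', w'.start']
    | succ t ih =>
      intro hj
      have ht : t < n := by omega
      rw [← w.tgt' t ht, ← w'.tgt' t ht, h t ht]
  ext i
  · exact hvs i.1 i.2
  · exact h i.1 i.2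

/-- Extract the sub-walk of length `len` starting at position `o`. -/
def SAW.sub {N : ℕ} {u : G.V} (W : G.SAW N u) (o len : ℕ) (h : o + len ≤ N) :
    G.SAW len (W.vs ⟨o, by omega⟩) where
  vs i := W.vs ⟨o + i.1, by have := i.isLt; omega⟩
  es i := W.es ⟨o + i.1, by have := i.isLt; omega⟩
  hsrc i := by
    have := W.src' (o + i.1) (by have := i.isLt; omega)
    rw [this]
    exact W.vs_congr rfl _ _
  htgt i := by
    have := W.tgt' (o + i.1) (by have := i.isLt; omega)
    rw [this]
    exact W.vs_congr (by simp only [Fin.val_succ]; omega) _ _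
  hstart := W.vs_congr (by simp) _ _
  hinj a b hab := by
    have := W.hinj hab
    simp only [Fin.mk.injEq] at this
    exact Fin.ext (by omega)

@[simp] lemma SAW.sub_vs {N : ℕ} {u : G.V} (W : G.SAW N u) (o len : ℕ) (h : o + len ≤ N)
    (i : Fin (len + 1)) : (W.sub o len h).vs i = W.vs ⟨o + i.1, by have := i.isLt; omega⟩ := rfl

@[simp] lemma SAW.sub_es {N : ℕ} {u : G.V} (W : G.SAW N u) (o len : ℕ) (h : o + len ≤ N)
    (i : Fin len) : (W.sub o len h).es i = W.es ⟨o + i.1, by have := i.isLt; omega⟩ := rfl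

lemma fin_mk_eq {n a b : ℕ} (h : a = b) (ha : a < n) (hb : b < n) :
    (⟨a, ha⟩ : Fin n) = ⟨b, hb⟩ := Fin.ext h

/-! ### Containment and extendability predicates -/

/-- `W` contains `w` as a sub-walk at offset `o`. -/
def ContainsAt {N n : ℕ} {u v : G.V} (W : G.SAW N u) (o : ℕ) (w : G.SAW n v)
    (h : o + n ≤ N) : Prop :=
  (∀ i : Fin (n+1), W.vs ⟨o + i.1, by have := i.isLt; omega⟩ = w.vs i) ∧
  (∀ i : Fin n, W.es ⟨o + i.1, by have := i.isLt; omega⟩ = w.es i)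

lemma containsAt_self {n : ℕ} {v : G.V} (w : G.SAW n v) :
    ContainsAt w 0 w (by omega) := by
  constructor
  · intro i; exact w.vs_congr (by omega) _ _
  · intro i; exact w.es_congr (by omega) _ _

/-- `w` admits a SAW extension of length at least `a` on the left. -/
def ExtL {n : ℕ} {v : G.V} (a : ℕ) (w : G.SAW n v) : Prop :=
  ∃ (N : ℕ) (u : G.V) (W : G.SAW N u) (o : ℕ) (h : o + n ≤ N),
    a ≤ o ∧ ContainsAt W o w h

/-- `w` admits a SAW extension of length at least `a` on the left and `b` on the right. -/
def Ext2 {n : ℕ} {v : G.V} (a b : ℕ) (w : G.SAW n v) : Prop :=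
  ∃ (N : ℕ) (u : G.V) (W : G.SAW N u) (o : ℕ) (h : o + n ≤ N),
    a ≤ o ∧ o + n + b ≤ N ∧ ContainsAt W o w h

lemma extL_zero {n : ℕ} {v : G.V} (w : G.SAW n v) : ExtL 0 w :=
  ⟨n, v, w, 0, by omega, by omega, containsAt_self w⟩

lemma Ext2.mono {n : ℕ} {v : G.V} {a b a' b' : ℕ} {w : G.SAW n v}
    (h : Ext2 a b w) (ha : a' ≤ a) (hb : b' ≤ b) : Ext2 a' b' w := by
  obtain ⟨N, u, W, o, hN, hao, hbo, hc⟩ := h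
  exact ⟨N, u, W, o, hN, by omega, by omega, hc⟩

end Dgraph
namespace Dgraph

variable {G : Dgraph}

/-! ### Automorphisms acting on SAWs -/

/-- Transport a SAW along an equality of base vertices. -/
def SAW.castV {n : ℕ} {v v' : G.V} (h : v = v') (w : G.SAW n v) : G.SAW n v' := h ▸ w

@[simp] lemma SAW.castV_vs {n : ℕ} {v v' : G.V} (h : v = v') (w : G.SAW n v) (i : Fin (n+1)) :
    (w.castV h).vs i = w.vs i := by subst h; rfl

@[simp] lemma SAW.castV_es {n : ℕ} {v v' : G.V} (h : v = v') (w : G.SAW n v) (i : Fin n) :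
    (w.castV h).es i = w.es i := by subst h; rfl

/-- The inverse of an automorphism. -/
def Aut.inv (φ : G.Aut) : G.Aut where
  vmap := φ.vmap.symm
  emap := φ.emap.symm
  src_eq e := φ.vmap.injective (by
    rw [← φ.src_eq, Equiv.apply_symm_apply, Equiv.apply_symm_apply])
  tgt_eq e := φ.vmap.injective (by
    rw [← φ.tgt_eq, Equiv.apply_symm_apply, Equiv.apply_symm_apply])

/-- The image of a SAW under an automorphism. -/
def Aut.mapSAW (φ : G.Aut) {n : ℕ} {v : G.V} (w : G.SAW n v) : G.SAW n (φ.vmap v) where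
  vs i := φ.vmap (w.vs i)
  es i := φ.emap (w.es i)
  hsrc i := by rw [φ.src_eq, w.hsrc]
  htgt i := by rw [φ.tgt_eq, w.htgt]
  hstart := by show φ.vmap (w.vs 0) = _; rw [w.hstart]
  hinj a b h := w.hinj (φ.vmap.injective h)

@[simp] lemma Aut.mapSAW_vs (φ : G.Aut) {n : ℕ} {v : G.V} (w : G.SAW n v) (i : Fin (n+1)) :
    (φ.mapSAW w).vs i = φ.vmap (w.vs i) := rfl

@[simp] lemma Aut.mapSAW_es (φ : G.Aut) {n : ℕ} {v : G.V} (w : G.SAW n v) (i : Fin n) :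
    (φ.mapSAW w).es i = φ.emap (w.es i) := rfl

/-- Cardinality of SAWs satisfying an `Aut`-invariant predicate is an orbit invariant. -/
lemma card_orbit_invariant (φ : G.Aut) {n : ℕ} (v : G.V)
    (P : ∀ u : G.V, G.SAW n u → Prop)
    (hP : ∀ (ψ : G.Aut) (u : G.V) (w : G.SAW n u), P u w → P _ (ψ.mapSAW w)) :
    Nat.card {w : G.SAW n v // P v w} = Nat.card {w : G.SAW n (φ.vmap v) // P _ w} := by
  have hcast : ∀ (u u' : G.V) (h : u = u') (w : G.SAW n u), P u w → P u' (w.castV h) := by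
    intro u u' h w hw; subst h; exact hw
  apply Nat.card_congr
  refine ⟨fun w => ⟨φ.mapSAW w.1, hP φ _ _ w.2⟩,
    fun w' => ⟨(φ.inv.mapSAW w'.1).castV (φ.vmap.symm_apply_apply v), ?_⟩, ?_, ?_⟩
  · exact hcast _ _ _ _ (hP φ.inv _ _ w'.2)
  · rintro ⟨w, hw⟩
    apply Subtype.ext
    apply SAW.ext_es
    intro i hi
    simp [Aut.inv]
  · rintro ⟨w', hw'⟩
    apply Subtype.ext
    apply SAW.ext_es
    intro i hi
    simp [Aut.inv]

lemma ext2_mapSAW (ψ : G.Aut) {n : ℕ} {a b : ℕ} (u : G.V) (w : G.SAW n u)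
    (h : Ext2 a b w) : Ext2 a b (ψ.mapSAW w) := by
  obtain ⟨N, x, W, o, hN, ha, hb, hc1, hc2⟩ := h
  refine ⟨N, ψ.vmap x, ψ.mapSAW W, o, hN, ha, hb, ?_, ?_⟩
  · intro i; simp [hc1 i]
  · intro i; simp [hc2 i]

lemma isDblExt_mapSAW (ψ : G.Aut) {n : ℕ} (u : G.V) (w : G.SAW n u)
    (h : G.IsDblExt w) : G.IsDblExt (ψ.mapSAW w) := by
  obtain ⟨vs, es, hinj, hedge, k, hv, he⟩ := h
  refine ⟨ψ.vmap ∘ vs, ψ.emap ∘ es, ψ.vmap.injective.comp hinj, ?_, k, ?_, ?_⟩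
  · intro i
    exact ⟨by simp [ψ.src_eq, (hedge i).1], by simp [ψ.tgt_eq, (hedge i).2]⟩
  · intro i; simp [hv i]
  · intro i; simp [he i]

end Dgraph
namespace Dgraph

variable {G : Dgraph}

/-! ### Balls (ignoring orientation) -/

/-- Ball of radius `k` around `v`, ignoring edge orientations. -/
def ball2 (G : Dgraph) (v : G.V) : ℕ → Set G.V
  | 0 => {v}
  | k+1 => G.ball2 v k ∪ (G.tgt '' {e | G.src e ∈ G.ball2 v k}) ∪
      (G.src '' {e | G.tgt e ∈ G.ball2 v k})

lemma ball2_finite (hlf : G.LocallyFinite) (v : G.V) : ∀ k, (G.ball2 v k).Finite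
  | 0 => Set.finite_singleton v
  | k+1 => by
    have ih := ball2_finite hlf v k
    have h1 : {e | G.src e ∈ G.ball2 v k}.Finite := by
      have : {e | G.src e ∈ G.ball2 v k} = ⋃ u ∈ G.ball2 v k, {e | G.src e = u} := by
        ext e; simp
      rw [this]; exact ih.biUnion (fun u _ => (hlf u).1)
    have h2 : {e | G.tgt e ∈ G.ball2 v k}.Finite := by
      have : {e | G.tgt e ∈ G.ball2 v k} = ⋃ u ∈ G.ball2 v k, {e | G.tgt e = u} := by
        ext e; simp
      rw [this]; exact ih.biUnion (fun u _ => (hlf u).2)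
    exact ((ih.union (h1.image _)).union (h2.image _))

lemma ball2_subset_succ (v : G.V) (k : ℕ) : G.ball2 v k ⊆ G.ball2 v (k+1) := by
  intro x hx; exact Set.mem_union_left _ (Set.mem_union_left _ hx)

lemma ball2_mono (v : G.V) {k k' : ℕ} (h : k ≤ k') : G.ball2 v k ⊆ G.ball2 v k' := by
  induction k' with
  | zero => have : k = 0 := by omega
            subst this; exact subset_rfl
  | succ t ih =>
    rcases Nat.lt_or_ge k (t+1) with h' | h'
    · exact (ih (by omega)).trans (ball2_subset_succ v t)
    · have : k = t + 1 := by omega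
      subst this; exact subset_rfl

lemma mem_ball2_self (v : G.V) (k : ℕ) : v ∈ G.ball2 v k :=
  ball2_mono v (Nat.zero_le k) rfl

lemma mem_ball2_tgt {v : G.V} {k : ℕ} {e : G.E} (h : G.src e ∈ G.ball2 v k) :
    G.tgt e ∈ G.ball2 v (k+1) :=
  Set.mem_union_left _ (Set.mem_union_right _ ⟨e, h, rfl⟩)

lemma mem_ball2_src {v : G.V} {k : ℕ} {e : G.E} (h : G.tgt e ∈ G.ball2 v k) :
    G.src e ∈ G.ball2 v (k+1) :=
  Set.mem_union_right _ ⟨e, h, rfl⟩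

/-- Vertices of a SAW lie in balls around any of its vertices. -/
lemma SAW.vs_mem_ball2 {N : ℕ} {u : G.V} (W : G.SAW N u) (o : ℕ) (ho : o ≤ N) :
    ∀ (t : ℕ) (i : Fin (N+1)), (i.1 = o + t ∨ i.1 + t = o) →
      W.vs i ∈ G.ball2 (W.vs ⟨o, by omega⟩) t := by
  intro t
  induction t with
  | zero =>
    intro i hi
    have hio : i.1 = o := by omega
    have : i = (⟨o, by omega⟩ : Fin (N+1)) := Fin.ext hio
    rw [this]; exact rfl
  | succ t ih =>
    intro i hi
    rcases hi with hi | hi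
    · have hlt : o + t < N := by have := i.isLt; omega
      have hsrc := W.src' (o+t) hlt
      have htgt := W.tgt' (o+t) hlt
      have h1 : W.vs ⟨o+t, by omega⟩ ∈ G.ball2 (W.vs ⟨o, by omega⟩) t :=
        ih ⟨o+t, by omega⟩ (Or.inl (show o + t = o + t from rfl))
      have : W.vs i = G.tgt (W.es ⟨o+t, hlt⟩) := by
        rw [htgt]; exact W.vs_congr (by omega) _ _
      rw [this]
      exact mem_ball2_tgt (by rw [hsrc]; exact h1)
    · have hlt : i.1 < N := by omega
      have hsrc := W.src' i.1 hlt
      have htgt := W.tgt' i.1 hlt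
      have h1 : W.vs ⟨i.1+1, by omega⟩ ∈ G.ball2 (W.vs ⟨o, by omega⟩) t :=
        ih ⟨i.1+1, by have := i.isLt; omega⟩ (Or.inr (show i.1 + 1 + t = o by omega))
      have : W.vs i = G.src (W.es ⟨i.1, hlt⟩) := by
        rw [hsrc]
      rw [this]
      exact mem_ball2_src (by rw [htgt]; exact h1)

lemma SAW.vs_mem_ball2' {N : ℕ} {u : G.V} (W : G.SAW N u) (o : ℕ) (ho : o ≤ N)
    (i : Fin (N+1)) : W.vs i ∈ G.ball2 (W.vs ⟨o, by omega⟩) N := by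
  rcases le_or_gt o i.1 with h | h
  · exact ball2_mono _ (by have := i.isLt; omega)
      (W.vs_mem_ball2 o ho (i.1 - o) i (Or.inl (by omega)))
  · exact ball2_mono _ (by omega)
      (W.vs_mem_ball2 o ho (o - i.1) i (Or.inr (by omega)))

/-! ### Finiteness of the set of SAWs -/

lemma finite_SAW (hlf : G.LocallyFinite) (n : ℕ) (v : G.V) : Finite (G.SAW n v) := by
  classical
  set E' : Set G.E := {e | G.src e ∈ G.ball2 v n} with hE'
  have hE'fin : E'.Finite := by
    have : E' = ⋃ u ∈ G.ball2 v n, {e | G.src e = u} := by ext e; simp [hE']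
    rw [this]; exact (ball2_finite hlf v n).biUnion (fun u _ => (hlf u).1)
  haveI := hE'fin.to_subtype
  have hmap : ∀ (w : G.SAW n v) (i : Fin n), w.es i ∈ E' := by
    intro w i
    have h0 : w.vs ⟨0, by omega⟩ = v := w.start'
    have := w.vs_mem_ball2' 0 (by omega) ⟨i.1, by have := i.isLt; omega⟩
    rw [h0] at this
    have hsrc := w.src' i.1 i.isLt
    simp only [hE', Set.mem_setOf_eq]
    rw [show (⟨i.1, i.isLt⟩ : Fin n) = i from Fin.ext rfl] at hsrc
    rw [hsrc]
    exact this
  apply Finite.of_injective (fun w (i : Fin n) => (⟨w.es i, hmap w i⟩ : E'))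
  intro w w' h
  apply SAW.ext_es
  intro i hi
  have := congrFun h ⟨i, hi⟩
  exact Subtype.ext_iff.mp this

lemma subsingleton_SAW_zero (v : G.V) : Subsingleton (G.SAW 0 v) :=
  ⟨fun w w' => SAW.ext_es (fun i hi => absurd hi (by omega))⟩

def trivialSAW (v : G.V) : G.SAW 0 v where
  vs _ := v
  es i := i.elim0
  hsrc i := i.elim0
  htgt i := i.elim0
  hstart := rfl
  hinj a b _ := Fin.ext (by omega)

end Dgraph
namespace Dgraph

variable {G : Dgraph}

/-! ### Chains and existence of long SAWs -/

/-- A directed chain of length `m` from `v` to `u`. -/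
def ChainTo (G : Dgraph) (v u : G.V) (m : ℕ) (f : Fin (m+1) → G.V) : Prop :=
  f ⟨0, by omega⟩ = v ∧ f ⟨m, by omega⟩ = u ∧
    ∀ (i : ℕ) (h : i < m), G.Adj (f ⟨i, by omega⟩) (f ⟨i+1, by omega⟩)

lemma exists_chain {v u : G.V} (h : Relation.ReflTransGen G.Adj v u) :
    ∃ m f, G.ChainTo v u m f := by
  induction h with
  | refl => exact ⟨0, fun _ => v, rfl, rfl, fun i hi => absurd hi (by omega)⟩
  | tail _ hadj ih =>
    obtain ⟨m, f, h1, h2, h3⟩ := ih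
    rename_i b c _
    classical
    refine ⟨m+1, fun i => if h : i.1 < m + 1 then f ⟨i.1, h⟩ else c, ?_, ?_, ?_⟩
    · simp only [dif_pos (show 0 < m + 1 by omega)]; exact h1
    · simp only [dif_neg (show ¬ (m + 1 < m + 1) by omega)]
    · intro i hi
      rcases Nat.lt_or_ge i m with h' | h'
      · simp only [dif_pos (show i < m + 1 by omega), dif_pos (show i + 1 < m + 1 by omega)]
        exact h3 i h'
      · have : i = m := by omega
        subst this
        simp only [dif_pos (show i < i + 1 by omega), dif_neg (show ¬ (i + 1 < i + 1) by omega)]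
        rw [h2]
        exact hadj

lemma chain_mem_ball2 {v u : G.V} {m : ℕ} {f : Fin (m+1) → G.V} (hch : G.ChainTo v u m f) :
    ∀ (i : ℕ) (h : i < m + 1), f ⟨i, h⟩ ∈ G.ball2 v i := by
  obtain ⟨h1, h2, h3⟩ := hch
  intro i
  induction i with
  | zero => intro h; rw [h1]; exact mem_ball2_self v 0
  | succ t ih =>
    intro h
    obtain ⟨e, he1, he2⟩ := h3 t (by omega)
    have : f ⟨t+1, h⟩ = G.tgt e := he2.symm
    rw [this]
    exact mem_ball2_tgt (by rw [he1]; exact ih (by omega))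

/-- From every vertex there are SAWs of every length. -/
lemma nonempty_SAW (hinf : Infinite G.V) (hlf : G.LocallyFinite) (hsc : G.StronglyConnected)
    (n : ℕ) (v : G.V) : Nonempty (G.SAW n v) := by
  classical
  -- pick a vertex outside the ball of radius n
  have hball := ball2_finite hlf v n
  obtain ⟨u, hu⟩ := (hball.infinite_compl).nonempty
  have hu : u ∉ G.ball2 v n := hu
  -- minimal chain from v to u
  set S : Set ℕ := {m | ∃ f, G.ChainTo v u m f} with hS
  have hSne : S.Nonempty := by
    obtain ⟨m, f, hf⟩ := exists_chain (hsc v u)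
    exact ⟨m, f, hf⟩
  set m₀ := sInf S with hm₀def
  obtain ⟨f, hf⟩ : ∃ f, G.ChainTo v u m₀ f := Nat.sInf_mem hSne
  have hn : n < m₀ := by
    by_contra h
    push_neg at h
    exact hu (ball2_mono v h (by
      have := chain_mem_ball2 hf m₀ (by omega)
      rwa [hf.2.1] at this))
  -- minimality: distance to f i is exactly i, hence f is injective
  have hdist : ∀ (i : ℕ) (hi : i < m₀ + 1),
      sInf {m | ∃ g, G.ChainTo v (f ⟨i, hi⟩) m g} = i := by
    intro i hi
    set Si : Set ℕ := {m | ∃ g, G.ChainTo v (f ⟨i, hi⟩) m g} with hSi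
    have hmem : i ∈ Si := by
      refine ⟨fun k => f ⟨k.1, by have := k.isLt; omega⟩, hf.1, rfl, ?_⟩
      intro t ht
      exact hf.2.2 t (by omega)
    have hle : sInf Si ≤ i := Nat.sInf_le hmem
    rcases Nat.lt_or_ge (sInf Si) i with hlt | hge
    · exfalso
      have hex : ∃ j, j < i ∧ ∃ g : Fin (j+1) → G.V, G.ChainTo v (f ⟨i, hi⟩) j g :=
        ⟨sInf Si, hlt, Nat.sInf_mem (⟨i, hmem⟩ : Si.Nonempty)⟩
      obtain ⟨j, hjlt, g, hg⟩ := hex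
      have him : i ≤ m₀ := by omega
      set L := j + (m₀ - i) with hL
      have hchain : G.ChainTo v u L (fun k =>
          if hk : k.1 ≤ j then g ⟨k.1, by omega⟩
          else f ⟨i + (k.1 - j), by have := k.isLt; omega⟩) := by
        refine ⟨?_, ?_, ?_⟩
        · simp only [dif_pos (show 0 ≤ j by omega)]
          exact hg.1
        · rcases Nat.eq_or_lt_of_le him with he | hlt2
          · simp only [dif_pos (show L ≤ j by omega)]
            have e1 : g ⟨L, by omega⟩ = g ⟨j, by omega⟩ :=
              congrArg g (fin_mk_eq (by omega) _ _)
            have e2 : f ⟨i, hi⟩ = u := by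
              have : f ⟨i, hi⟩ = f ⟨m₀, by omega⟩ := congrArg f (fin_mk_eq (by omega) _ _)
              rw [this]; exact hf.2.1
            rw [e1, hg.2.1, e2]
          · simp only [dif_neg (show ¬ (L ≤ j) by omega)]
            have : f ⟨i + (L - j), by omega⟩ = f ⟨m₀, by omega⟩ :=
              congrArg f (fin_mk_eq (by omega) _ _)
            rw [this]; exact hf.2.1
        · intro t ht
          rcases Nat.lt_or_ge (t+1) (j+1) with h1 | h1
          · simp only [dif_pos (show t ≤ j by omega), dif_pos (show t + 1 ≤ j by omega)]
            exact hg.2.2 t (by omega)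
          · rcases Nat.eq_or_lt_of_le h1 with h2 | h2
            · simp only [dif_pos (show t ≤ j by omega), dif_neg (show ¬ (t + 1 ≤ j) by omega)]
              have hgend : g ⟨t, by omega⟩ = f ⟨i, hi⟩ := by
                have : g ⟨t, by omega⟩ = g ⟨j, by omega⟩ :=
                  congrArg g (fin_mk_eq (by omega) _ _)
                rw [this]; exact hg.2.1
              rw [hgend]
              have h4 := hf.2.2 i (by omega)
              have h5 : f ⟨i + (t + 1 - j), by have := ht; omega⟩ = f ⟨i + 1, by omega⟩ :=
                congrArg f (fin_mk_eq (by omega) _ _)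
              rw [h5]
              exact h4
            · simp only [dif_neg (show ¬ (t ≤ j) by omega), dif_neg (show ¬ (t + 1 ≤ j) by omega)]
              have h4 := hf.2.2 (i + (t - j)) (by omega)
              have h5 : f ⟨i + (t + 1 - j), by have := ht; omega⟩ =
                  f ⟨i + (t - j) + 1, by omega⟩ := congrArg f (fin_mk_eq (by omega) _ _)
              rw [h5]
              exact h4
      have hLS : L ∈ S := ⟨_, hchain⟩
      have := Nat.sInf_le hLS
      omega
    · omega
  have hinj : Function.Injective f := by
    intro a b hab
    have ha : sInf {m | ∃ g, G.ChainTo v (f a) m g} = a.1 := hdist a.1 a.isLt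
    have hb : sInf {m | ∃ g, G.ChainTo v (f b) m g} = b.1 := hdist b.1 b.isLt
    rw [hab] at ha
    exact Fin.ext (by omega)
  -- build the SAW from the first n steps
  refine ⟨⟨fun i => f ⟨i.1, by have := i.isLt; omega⟩,
    fun i => (hf.2.2 i.1 (by have := i.isLt; omega)).choose, ?_, ?_, ?_, ?_⟩⟩
  · intro i
    have := (hf.2.2 i.1 (by have := i.isLt; omega)).choose_spec.1
    rw [this]
    exact congrArg f (Fin.ext (by simp))
  · intro i
    have := (hf.2.2 i.1 (by have := i.isLt; omega)).choose_spec.2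
    rw [this]
    exact congrArg f (Fin.ext (by simp))
  · exact hf.1
  · intro a b hab
    have := hinj hab
    simp only [Fin.mk.injEq] at this
    exact Fin.ext this

end Dgraph
namespace Dgraph

variable {G : Dgraph}

/-! ### Splitting SAWs and counting -/

/-- Initial segment of a SAW. -/
def SAW.take {N : ℕ} {v : G.V} (w : G.SAW N v) (m : ℕ) (h : m ≤ N) : G.SAW m v :=
  (w.sub 0 m (by omega)).castV w.start'

lemma SAW.take_vs {N : ℕ} {v : G.V} (w : G.SAW N v) (m : ℕ) (h : m ≤ N) (i : Fin (m+1)) :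
    (w.take m h).vs i = w.vs ⟨i.1, by have := i.isLt; omega⟩ := by
  rw [SAW.take, SAW.castV_vs, SAW.sub_vs]
  exact w.vs_congr (by omega) _ _

lemma SAW.take_es {N : ℕ} {v : G.V} (w : G.SAW N v) (m : ℕ) (h : m ≤ N) (i : Fin m) :
    (w.take m h).es i = w.es ⟨i.1, by have := i.isLt; omega⟩ := by
  rw [SAW.take, SAW.castV_es, SAW.sub_es]
  exact w.es_congr (by omega) _ _

lemma castV_pred {k : ℕ} (Q : ∀ u : G.V, G.SAW k u → Prop) {u u' : G.V} (h : u = u')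
    (w : G.SAW k u) (hw : Q u w) : Q u' (w.castV h) := by subst h; exact hw

/-- The key splitting estimate: walks of length `m + k` satisfying `Q` are bounded by
walks of length `m` satisfying `Q1` times the sup over `u` of walks of length `k`
satisfying `Q2`. -/
lemma card_split (hlf : G.LocallyFinite) {m k : ℕ} (v : G.V)
    (Q : G.SAW (m + k) v → Prop) (Q1 : G.SAW m v → Prop) (Q2 : ∀ u : G.V, G.SAW k u → Prop)
    (h1 : ∀ w hw, Q w → Q1 (w.take m hw))
    (h2 : ∀ (w : G.SAW (m+k) v) hw, Q w → Q2 _ (w.sub m k hw)) :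
    (Nat.card {w : G.SAW (m + k) v // Q w} : ℝ≥0∞) ≤
      (Nat.card {w1 : G.SAW m v // Q1 w1} : ℝ≥0∞) *
        ⨆ u : G.V, (Nat.card {w2 : G.SAW k u // Q2 u w2} : ℝ≥0∞) := by
  classical
  haveI := finite_SAW hlf (m+k) v
  haveI := finite_SAW hlf m v
  haveI : Fintype {w : G.SAW (m + k) v // Q w} := Fintype.ofFinite _
  haveI : Fintype {w1 : G.SAW m v // Q1 w1} := Fintype.ofFinite _
  set f : {w : G.SAW (m + k) v // Q w} → {w1 : G.SAW m v // Q1 w1} :=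
    fun w => ⟨w.1.take m (by omega), h1 w.1 (by omega) w.2⟩ with hf
  have hm : m < m + 1 := by omega
  -- fiberwise count
  have hcount : (Fintype.card {w : G.SAW (m + k) v // Q w} : ℝ≥0∞) =
      ∑ w1 : {w1 : G.SAW m v // Q1 w1},
        ((Finset.univ.filter (fun w => f w = w1)).card : ℝ≥0∞) := by
    rw [← Nat.cast_sum]
    congr 1
    rw [← Finset.card_univ]
    exact Finset.card_eq_sum_card_fiberwise (fun x _ => Finset.mem_univ (f x))
  -- each fiber injects into the corresponding sub-walk type
  have hfiber : ∀ w1 : {w1 : G.SAW m v // Q1 w1},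
      ((Finset.univ.filter (fun w => f w = w1)).card : ℝ≥0∞) ≤
        ⨆ u : G.V, (Nat.card {w2 : G.SAW k u // Q2 u w2} : ℝ≥0∞) := by
    intro w1
    haveI := finite_SAW hlf k (w1.1.vs ⟨m, hm⟩)
    have hinj : ∃ g : {w : {w : G.SAW (m + k) v // Q w} // f w = w1} →
        {w2 : G.SAW k (w1.1.vs ⟨m, hm⟩) // Q2 _ w2}, Function.Injective g := by
      refine ⟨fun w => ⟨((w.1.1.sub m k (by omega)).castV ?_),
        castV_pred Q2 _ _ (h2 w.1.1 (by omega) w.1.2)⟩, ?_⟩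
      · have hval : w.1.1.take m (by omega) = w1.1 := congrArg Subtype.val w.2
        exact (SAW.take_vs w.1.1 m (by omega) ⟨m, hm⟩).symm.trans
          (congrArg (fun z : G.SAW m v => z.vs ⟨m, hm⟩) hval)
      · intro x y hxy
        have hes2 : ∀ (i : ℕ) (hi : i < k),
            x.1.1.es ⟨m + i, by omega⟩ = y.1.1.es ⟨m + i, by omega⟩ := by
          intro i hi
          have := congrArg Subtype.val hxy
          simp only at this
          have := congrArg (fun z => SAW.es z ⟨i, hi⟩) this
          simpa only [SAW.castV_es, SAW.sub_es] using this
        have hes1 : ∀ (i : ℕ) (hi : i < m),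
            x.1.1.es ⟨i, by omega⟩ = y.1.1.es ⟨i, by omega⟩ := by
          intro i hi
          have hx := x.2
          have hy := y.2
          have hxy1 : f x.1 = f y.1 := by rw [hx, hy]
          have hval : x.1.1.take m (by omega) = y.1.1.take m (by omega) :=
            congrArg Subtype.val hxy1
          have := congrArg (fun z : G.SAW m v => z.es ⟨i, hi⟩) hval
          simpa only [SAW.take_es] using this
        apply Subtype.ext
        apply Subtype.ext
        apply SAW.ext_es
        intro i hi
        rcases Nat.lt_or_ge i m with h' | h'
        · exact hes1 i h'
        · have e1 : x.1.1.es ⟨i, hi⟩ = x.1.1.es ⟨m + (i - m), by omega⟩ :=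
            x.1.1.es_congr (by omega) _ _
          have e2 : y.1.1.es ⟨i, hi⟩ = y.1.1.es ⟨m + (i - m), by omega⟩ :=
            y.1.1.es_congr (by omega) _ _
          rw [e1, e2]
          exact hes2 (i - m) (by omega)
    obtain ⟨g, hg⟩ := hinj
    have : (Finset.univ.filter (fun w => f w = w1)).card =
        Fintype.card {w : {w : G.SAW (m + k) v // Q w} // f w = w1} :=
      (Fintype.card_subtype _).symm
    rw [this]
    calc (Fintype.card {w : {w : G.SAW (m + k) v // Q w} // f w = w1} : ℝ≥0∞)
        = (Nat.card {w : {w : G.SAW (m + k) v // Q w} // f w = w1} : ℝ≥0∞) := by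
          rw [Nat.card_eq_fintype_card]
      _ ≤ (Nat.card {w2 : G.SAW k (w1.1.vs ⟨m, hm⟩) // Q2 _ w2} : ℝ≥0∞) := by
          exact_mod_cast Nat.cast_le.mpr (Nat.card_le_card_of_injective g hg)
      _ ≤ ⨆ u : G.V, (Nat.card {w2 : G.SAW k u // Q2 u w2} : ℝ≥0∞) :=
          le_iSup (fun u => (Nat.card {w2 : G.SAW k u // Q2 u w2} : ℝ≥0∞)) _
  calc (Nat.card {w : G.SAW (m + k) v // Q w} : ℝ≥0∞)
      = (Fintype.card {w : G.SAW (m + k) v // Q w} : ℝ≥0∞) := by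
        rw [Nat.card_eq_fintype_card]
    _ = ∑ w1 : {w1 : G.SAW m v // Q1 w1},
        ((Finset.univ.filter (fun w => f w = w1)).card : ℝ≥0∞) := hcount
    _ ≤ ∑ _w1 : {w1 : G.SAW m v // Q1 w1},
        ⨆ u : G.V, (Nat.card {w2 : G.SAW k u // Q2 u w2} : ℝ≥0∞) :=
        Finset.sum_le_sum (fun w1 _ => hfiber w1)
    _ = (Fintype.card {w1 : G.SAW m v // Q1 w1} : ℝ≥0∞) *
        ⨆ u : G.V, (Nat.card {w2 : G.SAW k u // Q2 u w2} : ℝ≥0∞) := by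
        rw [Finset.sum_const, Finset.card_univ, nsmul_eq_mul]
    _ = (Nat.card {w1 : G.SAW m v // Q1 w1} : ℝ≥0∞) *
        ⨆ u : G.V, (Nat.card {w2 : G.SAW k u // Q2 u w2} : ℝ≥0∞) := by
        rw [Nat.card_eq_fintype_card]

end Dgraph
namespace Dgraph

variable {G : Dgraph}

/-! ### Submultiplicativity and growth bounds -/

lemma nat_card_le_one (α : Type*) [Subsingleton α] : Nat.card α ≤ 1 := by
  rcases isEmpty_or_nonempty α with h | h
  · rw [Nat.card_of_isEmpty]; omega
  · rw [Nat.card_unique]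

lemma sigma_card (n : ℕ) (v : G.V) : (G.sigma n v : ℝ≥0∞) =
    (Nat.card {w : G.SAW n v // True} : ℝ≥0∞) := by
  rw [sigma, Nat.card_congr (Equiv.subtypeUnivEquiv (fun _ => trivial))]

lemma le_ssigma (n : ℕ) (v : G.V) : (G.sigma n v : ℝ≥0∞) ≤ G.ssigma n :=
  le_iSup (fun u => (G.sigma n u : ℝ≥0∞)) v

lemma ssigma_submul (hlf : G.LocallyFinite) (m k : ℕ) :
    G.ssigma (m + k) ≤ G.ssigma m * G.ssigma k := by
  apply iSup_le
  intro v
  have h := card_split hlf (m := m) (k := k) v (fun _ => True) (fun _ => True)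
    (fun _ _ => True) (fun _ _ _ => trivial) (fun _ _ _ => trivial)
  rw [sigma_card]
  refine h.trans (mul_le_mul' ?_ ?_)
  · rw [← sigma_card]; exact le_ssigma m v
  · apply iSup_le
    intro u
    rw [← sigma_card]
    exact le_ssigma k u

lemma one_le_sigma (hinf : Infinite G.V) (hlf : G.LocallyFinite) (hsc : G.StronglyConnected)
    (n : ℕ) (v : G.V) : 1 ≤ G.sigma n v := by
  haveI := finite_SAW hlf n v
  haveI := nonempty_SAW hinf hlf hsc n v
  exact Nat.card_pos

lemma one_le_ssigma (hinf : Infinite G.V) (hlf : G.LocallyFinite) (hsc : G.StronglyConnected)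
    (n : ℕ) : 1 ≤ G.ssigma n := by
  refine le_trans ?_ (le_ssigma n (Classical.arbitrary G.V))
  exact_mod_cast Nat.one_le_cast.mpr (one_le_sigma hinf hlf hsc n _)

/-- Out-degree is an orbit invariant. -/
lemma outdeg_orbit (φ : G.Aut) (v : G.V) :
    Nat.card {e : G.E // G.src e = v} = Nat.card {e : G.E // G.src e = φ.vmap v} := by
  apply Nat.card_congr
  refine ⟨fun e => ⟨φ.emap e.1, by rw [φ.src_eq, e.2]⟩,
    fun e => ⟨φ.emap.symm e.1, ?_⟩, ?_, ?_⟩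
  · have := φ.inv.src_eq e.1
    simp only [Aut.inv] at this
    rw [this, e.2, Equiv.symm_apply_apply]
  · intro e; apply Subtype.ext; simp
  · intro e; apply Subtype.ext; simp

/-- A uniform out-degree bound. -/
lemma exists_degree_bound (hlf : G.LocallyFinite) (hqt : G.QuasiTransitive) :
    ∃ D : ℕ, ∀ v : G.V, Nat.card {e : G.E // G.src e = v} ≤ D := by
  obtain ⟨S, hS⟩ := hqt
  refine ⟨S.sup (fun s => Nat.card {e : G.E // G.src e = s}), ?_⟩
  intro v
  obtain ⟨s, hsS, φ, hφ⟩ := hS v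
  rw [← hφ, ← outdeg_orbit φ s]
  exact Finset.le_sup (f := fun s => Nat.card {e : G.E // G.src e = s}) hsS

lemma sigma_le_pow (hlf : G.LocallyFinite) {D : ℕ}
    (hD : ∀ v : G.V, Nat.card {e : G.E // G.src e = v} ≤ D) :
    ∀ (n : ℕ) (v : G.V), (G.sigma n v : ℝ≥0∞) ≤ (D : ℝ≥0∞) ^ n := by
  intro n
  induction n with
  | zero =>
    intro v
    haveI := subsingleton_SAW_zero (G := G) v
    simp only [pow_zero, sigma]
    exact_mod_cast Nat.cast_le.mpr (nat_card_le_one _)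
  | succ n ih =>
    intro v
    have hcast : (G.sigma (n+1) v : ℝ≥0∞) = (G.sigma (1+n) v : ℝ≥0∞) := by
      rw [show n + 1 = 1 + n by ring]
    rw [hcast, sigma_card]
    have h := card_split hlf (m := 1) (k := n) v (fun _ => True) (fun _ => True)
      (fun _ _ => True) (fun _ _ _ => trivial) (fun _ _ _ => trivial)
    refine h.trans ?_
    have h1 : (Nat.card {w1 : G.SAW 1 v // True} : ℝ≥0∞) ≤ (D : ℝ≥0∞) := by
      haveI := finite_SAW hlf 1 v
      haveI : Finite {e : G.E // G.src e = v} := by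
        have : {e : G.E | G.src e = v}.Finite := (hlf v).1
        exact this.to_subtype
      have hinj : Function.Injective (fun (w : {w1 : G.SAW 1 v // True}) =>
          (⟨w.1.es ⟨0, by omega⟩, by rw [w.1.src' 0 (by omega), w.1.start']⟩ :
            {e : G.E // G.src e = v})) := by
        intro w w' h
        apply Subtype.ext
        apply SAW.ext_es
        intro i hi
        have : i = 0 := by omega
        subst this
        exact Subtype.ext_iff.mp h
      refine le_trans ?_ (Nat.cast_le.mpr (hD v))
      exact_mod_cast Nat.cast_le.mpr (Nat.card_le_card_of_injective _ hinj)
    calc (Nat.card {w1 : G.SAW 1 v // True} : ℝ≥0∞) *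
          ⨆ u : G.V, (Nat.card {w2 : G.SAW n u // True} : ℝ≥0∞)
        ≤ (D : ℝ≥0∞) * (D : ℝ≥0∞) ^ n := by
          refine mul_le_mul' h1 (iSup_le fun u => ?_)
          rw [← sigma_card]
          exact ih u
      _ = (D : ℝ≥0∞) ^ (n + 1) := by ring
end Dgraph
namespace Dgraph

variable {G : Dgraph}

/-! ### The key block-decomposition estimate -/

/-- Supremum over base vertices of the number of `(a,b)`-two-sidedly-extendable `n`-SAWs. -/
noncomputable def Tbar (G : Dgraph) (a b n : ℕ) : ℝ≥0∞ :=
  ⨆ v : G.V, (Nat.card {w : G.SAW n v // Ext2 a b w} : ℝ≥0∞)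

lemma Tbar_le_ssigma (hlf : G.LocallyFinite) (a b n : ℕ) : G.Tbar a b n ≤ G.ssigma n := by
  apply iSup_mono
  intro v
  haveI := finite_SAW hlf n v
  exact_mod_cast Nat.cast_le.mpr (Nat.card_le_card_of_injective _ Subtype.val_injective)

lemma key_decomp (hlf : G.LocallyFinite) (n : ℕ) :
    ∀ (k a : ℕ) (v : G.V),
    (Nat.card {w : G.SAW (n * k) v // ExtL a w} : ℝ≥0∞) ≤
      ∏ i ∈ Finset.range k, G.Tbar (a + n * i) (n * (k - 1 - i)) n := by
  intro k
  induction k with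
  | zero =>
    intro a v
    rw [Finset.prod_range_zero, show n * 0 = 0 by ring]
    haveI := subsingleton_SAW_zero (G := G) v
    exact_mod_cast Nat.cast_le.mpr (nat_card_le_one _)
  | succ k ih =>
    intro a v
    rw [show n * (k + 1) = n + n * k by ring]
    have h1 : ∀ (w : G.SAW (n + n * k) v) (hw : n ≤ n + n * k), ExtL a w →
        Ext2 a (n * k) (w.take n hw) := by
      rintro w hw ⟨N, u, W, o, hN, hao, hc1, hc2⟩
      refine ⟨N, u, W, o, by omega, hao, by omega, ?_, ?_⟩
      · intro i
        rw [SAW.take_vs]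
        exact hc1 ⟨i.1, by have := i.isLt; omega⟩
      · intro i
        rw [SAW.take_es]
        exact hc2 ⟨i.1, by have := i.isLt; omega⟩
    have h2 : ∀ (w : G.SAW (n + n * k) v) (hw : n + n * k ≤ n + n * k), ExtL a w →
        ExtL (a + n) (w.sub n (n * k) hw) := by
      rintro w hw ⟨N, u, W, o, hN, hao, hc1, hc2⟩
      refine ⟨N, u, W, o + n, by omega, by omega, ?_, ?_⟩
      · intro i
        rw [SAW.sub_vs]
        exact (W.vs_congr (show o + n + i.1 = o + (n + i.1) by omega) _ _).trans
          (hc1 ⟨n + i.1, by have := i.isLt; omega⟩)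
      · intro i
        rw [SAW.sub_es]
        exact (W.es_congr (show o + n + i.1 = o + (n + i.1) by omega) _ _).trans
          (hc2 ⟨n + i.1, by have := i.isLt; omega⟩)
    have hsplit := card_split hlf (m := n) (k := n * k) v (ExtL a) (Ext2 a (n * k))
      (fun u w2 => ExtL (a + n) w2) h1 h2
    refine hsplit.trans ?_
    have hA : (Nat.card {w1 : G.SAW n v // Ext2 a (n * k) w1} : ℝ≥0∞) ≤
        G.Tbar a (n * k) n :=
      le_iSup (fun u => (Nat.card {w : G.SAW n u // Ext2 a (n * k) w} : ℝ≥0∞)) v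
    have hB : (⨆ u : G.V, (Nat.card {w2 : G.SAW (n * k) u // ExtL (a + n) w2} : ℝ≥0∞)) ≤
        ∏ i ∈ Finset.range k, G.Tbar (a + n + n * i) (n * (k - 1 - i)) n :=
      iSup_le (fun u => ih (a + n) u)
    refine (mul_le_mul' hA hB).trans (le_of_eq ?_)
    have e0 : G.Tbar (a + n * 0) (n * (k + 1 - 1 - 0)) n = G.Tbar a (n * k) n := by
      have h3 : a + n * 0 = a := by ring
      have h4 : k + 1 - 1 - 0 = k := by omega
      rw [h3, h4]
    have estep : ∀ i ∈ Finset.range k,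
        G.Tbar (a + n * (i + 1)) (n * (k + 1 - 1 - (i + 1))) n
          = G.Tbar (a + n + n * i) (n * (k - 1 - i)) n := by
      intro i _
      have e1 : a + n * (i + 1) = a + n + n * i := by ring
      have e2 : k + 1 - 1 - (i + 1) = k - 1 - i := by omega
      rw [e1, e2]
    rw [Finset.prod_range_succ', e0, Finset.prod_congr rfl estep, mul_comm]

lemma ssigma_le_prod (hlf : G.LocallyFinite) (n k : ℕ) :
    G.ssigma (n * k) ≤ ∏ i ∈ Finset.range k, G.Tbar (n * i) (n * (k - 1 - i)) n := by
  apply iSup_le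
  intro v
  have hcard : (G.sigma (n * k) v : ℝ≥0∞) =
      (Nat.card {w : G.SAW (n * k) v // ExtL 0 w} : ℝ≥0∞) := by
    rw [sigma, Nat.card_congr (Equiv.subtypeUnivEquiv (fun w => extL_zero w))]
  rw [hcard]
  refine (key_decomp hlf n k 0 v).trans (le_of_eq ?_)
  apply Finset.prod_congr rfl
  intro i _
  rw [Nat.zero_add]

end Dgraph
namespace Dgraph

variable {G : Dgraph}

/-! ### Kőnig-type compactness for two-sided extensions -/

/-- The type of two-sided extensions of `w` by `j` steps on each side. -/
def Lvl {n : ℕ} {v : G.V} (w : G.SAW n v) (j : ℕ) : Type :=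
  {q : Σ u : G.V, G.SAW (n + 2*j) u // ContainsAt q.2 j w (by omega)}

lemma Lvl.center {n : ℕ} {v : G.V} {w : G.SAW n v} {j : ℕ} (q : Lvl w j) :
    q.1.2.vs ⟨j, by omega⟩ = v := by
  have := q.2.1 ⟨0, by omega⟩
  rw [w.start'] at this
  exact (q.1.2.vs_congr (show j = j + 0 by omega) _ _).trans this

lemma Lvl.finite (hlf : G.LocallyFinite) {n : ℕ} {v : G.V} (w : G.SAW n v) (j : ℕ) :
    Finite (Lvl w j) := by
  classical
  set m := n + 2*j with hm
  set E' : Set G.E := {e | G.src e ∈ G.ball2 v m} with hE'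
  have hE'fin : E'.Finite := by
    have : E' = ⋃ u ∈ G.ball2 v m, {e | G.src e = u} := by ext e; simp [hE']
    rw [this]; exact (ball2_finite hlf v m).biUnion (fun u _ => (hlf u).1)
  haveI := hE'fin.to_subtype
  have hmem : ∀ (q : Lvl w j) (i : Fin m), q.1.2.es i ∈ E' := by
    intro q i
    have h1 := q.1.2.vs_mem_ball2' j (by omega) ⟨i.1, by have := i.isLt; omega⟩
    rw [q.center] at h1
    have h2 := q.1.2.src' i.1 i.isLt
    rw [show (⟨i.1, i.isLt⟩ : Fin m) = i from Fin.ext rfl] at h2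
    simp only [hE', Set.mem_setOf_eq]
    rw [h2]
    exact h1
  have hstartmem : ∀ (q : Lvl w j), q.1.1 ∈ G.ball2 v m := by
    intro q
    have h1 := q.1.2.vs_mem_ball2' j (by omega) ⟨0, by omega⟩
    rw [q.center] at h1
    rw [← q.1.2.start']
    exact h1
  haveI := (ball2_finite hlf v m).to_subtype
  apply Finite.of_injective (fun (q : Lvl w j) =>
    ((⟨q.1.1, hstartmem q⟩, fun i : Fin m => (⟨q.1.2.es i, hmem q i⟩ : E')) :
      (G.ball2 v m).Elem × (Fin m → E')))
  rintro ⟨⟨u, W⟩, hq⟩ ⟨⟨u', W'⟩, hq'⟩ h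
  obtain ⟨h1, h2⟩ := Prod.ext_iff.mp h
  simp only at h1 h2
  have h1' : u = u' := Subtype.ext_iff.mp h1
  subst h1'
  apply Subtype.ext
  have hW : W = W' := by
    apply SAW.ext_es
    intro i hi
    have := congrFun h2 ⟨i, hi⟩
    exact Subtype.ext_iff.mp this
  subst hW
  rfl

lemma Lvl.nonempty {n : ℕ} {v : G.V} {w : G.SAW n v} (j : ℕ) (h : Ext2 j j w) :
    Nonempty (Lvl w j) := by
  obtain ⟨N, u, W, o, hN, hjo, hb, hc1, hc2⟩ := h
  refine ⟨⟨⟨W.vs ⟨o - j, by omega⟩, W.sub (o - j) (n + 2*j) (by omega)⟩, ?_, ?_⟩⟩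
  · intro i
    rw [SAW.sub_vs]
    exact (W.vs_congr (show o - j + (j + i.1) = o + i.1 by omega) _ _).trans (hc1 i)
  · intro i
    rw [SAW.sub_es]
    exact (W.es_congr (show o - j + (j + i.1) = o + i.1 by omega) _ _).trans (hc2 i)

/-- Restriction map between levels. -/
def Lvl.restrict {n : ℕ} {v : G.V} {w : G.SAW n v} (j : ℕ) (q : Lvl w (j+1)) : Lvl w j := by
  refine ⟨⟨q.1.2.vs ⟨1, by omega⟩, q.1.2.sub 1 (n + 2*j) (by omega)⟩, ?_, ?_⟩
  · intro i
    rw [SAW.sub_vs]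
    exact (q.1.2.vs_congr (show 1 + (j + i.1) = (j+1) + i.1 by omega) _ _).trans (q.2.1 i)
  · intro i
    rw [SAW.sub_es]
    exact (q.1.2.es_congr (show 1 + (j + i.1) = (j+1) + i.1 by omega) _ _).trans (q.2.2 i)

lemma Lvl.restrict_vs {n : ℕ} {v : G.V} {w : G.SAW n v} (j : ℕ) (q : Lvl w (j+1))
    (x : ℕ) (hx : x < n + 2*j + 1) :
    (Lvl.restrict j q).1.2.vs ⟨x, hx⟩ = q.1.2.vs ⟨x + 1, by omega⟩ := by
  show (q.1.2.sub 1 (n + 2*j) (by omega)).vs ⟨x, hx⟩ = _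
  rw [SAW.sub_vs]
  exact q.1.2.vs_congr (show 1 + x = x + 1 by omega) _ _

lemma Lvl.restrict_es {n : ℕ} {v : G.V} {w : G.SAW n v} (j : ℕ) (q : Lvl w (j+1))
    (y : ℕ) (hy : y < n + 2*j) :
    (Lvl.restrict j q).1.2.es ⟨y, hy⟩ = q.1.2.es ⟨y + 1, by omega⟩ := by
  show (q.1.2.sub 1 (n + 2*j) (by omega)).es ⟨y, hy⟩ = _
  rw [SAW.sub_es]
  exact q.1.2.es_congr (show 1 + y = y + 1 by omega) _ _

end Dgraph
namespace Dgraph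

open CategoryTheory Opposite

variable {G : Dgraph}

lemma isDblExt_of_forall_ext2 (hlf : G.LocallyFinite) {n : ℕ} {v : G.V} (w : G.SAW n v)
    (h : ∀ j, Ext2 j j w) : G.IsDblExt w := by
  classical
  haveI : ∀ j : ℕᵒᵖ, Finite ((Functor.ofOpSequence (X := Lvl w) (fun j => TypeCat.ofHom (Lvl.restrict j))).obj j) :=
    fun j => Lvl.finite hlf w j.unop
  haveI : ∀ j : ℕᵒᵖ, Nonempty ((Functor.ofOpSequence (X := Lvl w) (fun j => TypeCat.ofHom (Lvl.restrict j))).obj j) :=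
    fun j => Lvl.nonempty j.unop (h j.unop)
  obtain ⟨s, hs⟩ := nonempty_sections_of_finite_inverse_system
    (Functor.ofOpSequence (X := Lvl w) (fun j => TypeCat.ofHom (Lvl.restrict j)))
  let A : ∀ j : ℕ, Lvl w j := fun j => s (op j)
  have hstep : ∀ j : ℕ, Lvl.restrict j (A (j+1)) = A j := by
    intro j
    have h2 := hs (f := (homOfLE (Nat.le_add_right j 1)).op)
    rw [Functor.ofOpSequence_map_homOfLE_succ] at h2
    exact h2
  have hlevel : ∀ (j j' : ℕ) (hjj : j = j') (x : ℕ) (hx : x < n + 2*j + 1)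
      (hx' : x < n + 2*j' + 1), (A j).1.2.vs ⟨x, hx⟩ = (A j').1.2.vs ⟨x, hx'⟩ := by
    intro j j' hjj
    subst hjj
    intro x hx hx'
    rfl
  have hlevele : ∀ (j j' : ℕ) (hjj : j = j') (y : ℕ) (hy : y < n + 2*j)
      (hy' : y < n + 2*j'), (A j).1.2.es ⟨y, hy⟩ = (A j').1.2.es ⟨y, hy'⟩ := by
    intro j j' hjj
    subst hjj
    intro y hy hy'
    rfl
  have hcohv : ∀ (j x : ℕ) (hx : x < n + 2*j + 1),
      (A j).1.2.vs ⟨x, hx⟩ = (A (j+1)).1.2.vs ⟨x + 1, by omega⟩ := by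
    intro j x hx
    rw [← hstep j]
    exact Lvl.restrict_vs j (A (j+1)) x hx
  have hcohe : ∀ (j y : ℕ) (hy : y < n + 2*j),
      (A j).1.2.es ⟨y, hy⟩ = (A (j+1)).1.2.es ⟨y + 1, by omega⟩ := by
    intro j y hy
    rw [← hstep j]
    exact Lvl.restrict_es j (A (j+1)) y hy
  have hcohv' : ∀ (d j x : ℕ) (hx : x < n + 2*j + 1),
      (A j).1.2.vs ⟨x, hx⟩ = (A (j+d)).1.2.vs ⟨x + d, by omega⟩ := by
    intro d
    induction d with
    | zero =>
      intro j x hx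
      exact (hlevel j (j+0) (by omega) x hx (by omega)).trans
        ((A (j+0)).1.2.vs_congr (show x = x + 0 by omega) (by omega) (by omega))
    | succ d ih =>
      intro j x hx
      rw [hcohv j x hx, ih (j+1) (x+1) (by omega)]
      exact (hlevel (j+1+d) (j+(d+1)) (by omega) (x+1+d) (by omega) (by omega)).trans
        ((A (j+(d+1))).1.2.vs_congr (show x+1+d = x+(d+1) by omega) (by omega) (by omega))
  have hcohe' : ∀ (d j y : ℕ) (hy : y < n + 2*j),
      (A j).1.2.es ⟨y, hy⟩ = (A (j+d)).1.2.es ⟨y + d, by omega⟩ := by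
    intro d
    induction d with
    | zero =>
      intro j y hy
      exact (hlevele j (j+0) (by omega) y hy (by omega)).trans
        ((A (j+0)).1.2.es_congr (show y = y + 0 by omega) (by omega) (by omega))
    | succ d ih =>
      intro j y hy
      rw [hcohe j y hy, ih (j+1) (y+1) (by omega)]
      exact (hlevele (j+1+d) (j+(d+1)) (by omega) (y+1+d) (by omega) (by omega)).trans
        ((A (j+(d+1))).1.2.es_congr (show y+1+d = y+(d+1) by omega) (by omega) (by omega))
  have hAv : ∀ (j x : ℕ) (hx : x < n + 2*j + 1) (j' x' : ℕ) (hx' : x' < n + 2*j' + 1),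
      j ≤ j' → x' + j = x + j' → (A j).1.2.vs ⟨x, hx⟩ = (A j').1.2.vs ⟨x', hx'⟩ := by
    intro j x hx j' x' hx' hjj hxx
    rw [hcohv' (j' - j) j x hx]
    exact (hlevel (j + (j' - j)) j' (by omega) (x + (j' - j)) (by omega) (by omega)).trans
      ((A j').1.2.vs_congr (show x + (j' - j) = x' by omega) (by omega) (by omega))
  have hAe : ∀ (j y : ℕ) (hy : y < n + 2*j) (j' y' : ℕ) (hy' : y' < n + 2*j'),
      j ≤ j' → y' + j = y + j' → (A j).1.2.es ⟨y, hy⟩ = (A j').1.2.es ⟨y', hy'⟩ := by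
    intro j y hy j' y' hy' hjj hyy
    rw [hcohe' (j' - j) j y hy]
    exact (hlevele (j + (j' - j)) j' (by omega) (y + (j' - j)) (by omega) (by omega)).trans
      ((A j').1.2.es_congr (show y + (j' - j) = y' by omega) (by omega) (by omega))
  refine ⟨fun t : ℤ => (A t.natAbs).1.2.vs ⟨(t + t.natAbs).toNat, by omega⟩,
    fun t : ℤ => (A (t.natAbs + 1)).1.2.es ⟨(t + t.natAbs + 1).toNat, by omega⟩,
    ?_, ?_, 0, ?_, ?_⟩
  · -- injectivity
    intro t t' htt
    dsimp only at htt
    rw [hAv t.natAbs _ (by omega) (max t.natAbs t'.natAbs) (t + (max t.natAbs t'.natAbs) : ℤ).toNat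
        (by omega) (by omega) (by omega),
      hAv t'.natAbs _ (by omega) (max t.natAbs t'.natAbs) (t' + (max t.natAbs t'.natAbs) : ℤ).toNat
        (by omega) (by omega) (by omega)] at htt
    have := (A (max t.natAbs t'.natAbs)).1.2.hinj htt
    simp only [Fin.mk.injEq] at this
    omega
  · -- edge relations
    intro i
    dsimp only
    have he : (A (i.natAbs + 1)).1.2.es ⟨(i + i.natAbs + 1).toNat, by omega⟩ =
        (A (i.natAbs + 2)).1.2.es ⟨(i + (i.natAbs + 2) : ℤ).toNat, by omega⟩ :=
      hAe _ _ (by omega) (i.natAbs + 2) _ (by omega) (by omega) (by omega)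
    constructor
    · rw [he, (A (i.natAbs + 2)).1.2.src' ((i + (i.natAbs + 2) : ℤ)).toNat (by omega)]
      exact (hAv i.natAbs _ (by omega) (i.natAbs + 2) _ (by omega) (by omega) (by omega)).symm
    · rw [he, (A (i.natAbs + 2)).1.2.tgt' ((i + (i.natAbs + 2) : ℤ)).toNat (by omega)]
      exact (hAv (i+1).natAbs _ (by omega) (i.natAbs + 2) ((i + (i.natAbs + 2) : ℤ).toNat + 1)
        (by omega) (by omega) (by omega)).symm
  · -- vertex match
    intro i
    dsimp only
    exact (hAv _ _ (by omega) n (n + i.1) (by omega) (by omega) (by omega)).trans ((A n).2.1 i)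
  · -- edge match
    intro i
    dsimp only
    have he : (A ((0 + (i : ℤ)).natAbs + 1)).1.2.es
        ⟨((0 + (i : ℤ)) + (0 + (i : ℤ)).natAbs + 1).toNat, by omega⟩ =
        (A n).1.2.es ⟨n + i.1, by have := i.isLt; omega⟩ :=
      hAe _ _ (by omega) n (n + i.1) (by have := i.isLt; omega) (by have := i.isLt; omega)
        (by have := i.isLt; omega)
    exact he.trans ((A n).2.2 i)

end Dgraph
namespace Dgraph

variable {G : Dgraph}

/-! ### Stabilisation: far enough two-sided extendability equals double extendability -/

lemma card_mono_pred (hlf : G.LocallyFinite) {n : ℕ} {v : G.V} (P Q : G.SAW n v → Prop)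
    (h : ∀ w, P w → Q w) :
    Nat.card {w : G.SAW n v // P w} ≤ Nat.card {w : G.SAW n v // Q w} := by
  haveI := finite_SAW hlf n v
  exact Nat.card_le_card_of_injective (fun x => ⟨x.1, h x.1 x.2⟩)
    (fun x y hxy => by
      apply Subtype.ext
      have := congrArg Subtype.val hxy
      simpa using this)

lemma stab_vertex (hlf : G.LocallyFinite) (n : ℕ) (v : G.V) :
    ∃ M : ℕ, ∀ a b : ℕ, M ≤ a → M ≤ b →
      Nat.card {w : G.SAW n v // Ext2 a b w} ≤ G.sigmaFB n v := by
  classical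
  haveI := finite_SAW hlf n v
  set c : ℕ → ℕ := fun j => Nat.card {w : G.SAW n v // Ext2 j j w} with hc
  have hmono : ∀ j j' : ℕ, j ≤ j' → c j' ≤ c j := fun j j' hjj =>
    card_mono_pred hlf _ _ (fun w hw => hw.mono hjj hjj)
  obtain ⟨M, hM⟩ : ∃ M, c M = sInf (Set.range c) :=
    Nat.sInf_mem (Set.range_nonempty c)
  have hstab : ∀ j, M ≤ j → c j = c M := by
    intro j hj
    refine le_antisymm (hmono M j hj) ?_
    rw [hM]
    exact Nat.sInf_le ⟨j, rfl⟩
  have hsets : ∀ j, M ≤ j → {w : G.SAW n v | Ext2 j j w} = {w : G.SAW n v | Ext2 M M w} := by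
    intro j hj
    apply Set.eq_of_subset_of_ncard_le
    · intro w hw
      exact hw.mono hj hj
    · rw [← Nat.card_coe_set_eq, ← Nat.card_coe_set_eq]
      exact le_of_eq (hstab j hj).symm
    · exact Set.toFinite _
  have hFB : ∀ w : G.SAW n v, Ext2 M M w → G.IsDblExt w := by
    intro w hw
    apply isDblExt_of_forall_ext2 hlf w
    intro j
    rcases le_or_gt j M with hj | hj
    · exact hw.mono hj hj
    · have : w ∈ {w : G.SAW n v | Ext2 j j w} := by
        rw [hsets j (by omega)]
        exact hw
      exact this
  refine ⟨M, fun a b ha hb => ?_⟩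
  calc Nat.card {w : G.SAW n v // Ext2 a b w}
      ≤ Nat.card {w : G.SAW n v // Ext2 M M w} :=
        card_mono_pred hlf _ _ (fun w hw => hw.mono ha hb)
    _ ≤ Nat.card {w : G.SAW n v // G.IsDblExt w} := card_mono_pred hlf _ _ hFB
    _ = G.sigmaFB n v := rfl

lemma stab_uniform (hlf : G.LocallyFinite) (hqt : G.QuasiTransitive) (n : ℕ) :
    ∃ M : ℕ, ∀ (v : G.V) (a b : ℕ), M ≤ a → M ≤ b →
      Nat.card {w : G.SAW n v // Ext2 a b w} ≤ G.sigmaFB n v := by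
  classical
  obtain ⟨S, hS⟩ := hqt
  set Mf : G.V → ℕ := fun u => (stab_vertex hlf n u).choose with hMf
  refine ⟨S.sup Mf, fun v a b ha hb => ?_⟩
  obtain ⟨s, hsS, φ, hφ⟩ := hS v
  have hcard1 : Nat.card {w : G.SAW n v // Ext2 a b w} =
      Nat.card {w : G.SAW n s // Ext2 a b w} := by
    have := card_orbit_invariant φ s (fun u (w : G.SAW n u) => Ext2 a b w)
      (fun ψ u w hw => ext2_mapSAW ψ u w hw)
    rw [hφ] at this
    exact this.symm
  have hcard2 : G.sigmaFB n s = G.sigmaFB n v := by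
    have := card_orbit_invariant φ s (fun u (w : G.SAW n u) => G.IsDblExt w)
      (fun ψ u w hw => isDblExt_mapSAW ψ u w hw)
    rw [hφ] at this
    exact this
  rw [hcard1, ← hcard2]
  have hMs : Mf s ≤ S.sup Mf := Finset.le_sup hsS
  exact (stab_vertex hlf n s).choose_spec a b (hMs.trans ha) (hMs.trans hb)

lemma Tbar_le_ssigmaFB (hlf : G.LocallyFinite) (hqt : G.QuasiTransitive) (n : ℕ) :
    ∃ M : ℕ, ∀ a b : ℕ, M ≤ a → M ≤ b → G.Tbar a b n ≤ G.ssigmaFB n := by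
  obtain ⟨M, hM⟩ := stab_uniform hlf hqt n
  refine ⟨M, fun a b ha hb => iSup_le (fun v => ?_)⟩
  refine le_trans ?_ (le_iSup (fun u => (G.sigmaFB n u : ℝ≥0∞)) v)
  exact_mod_cast Nat.cast_le.mpr (hM v a b ha hb)

end Dgraph
namespace Dgraph

variable {G : Dgraph}

/-! ### Doubly extendable walks are forward and backward extendable -/

lemma IsDblExt.isFwdExt {n : ℕ} {v : G.V} {w : G.SAW n v} (h : G.IsDblExt w) :
    G.IsFwdExt w := by
  obtain ⟨vs, es, hinj, hedge, k, hv, he⟩ := h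
  refine ⟨fun i => vs (k + i), fun i => es (k + i), ?_, ?_, ?_, ?_⟩
  · intro a b hab
    have := hinj hab
    omega
  · intro i
    refine ⟨(hedge (k + i)).1, ?_⟩
    rw [(hedge (k + i)).2]
    exact congrArg vs (by push_cast; ring)
  · intro i; exact hv i
  · intro i; exact he i
lemma IsDblExt.isBwdExt {n : ℕ} {v : G.V} {w : G.SAW n v} (h : G.IsDblExt w) :
    G.IsBwdExt w := by
  obtain ⟨vs, es, hinj, hedge, k, hv, he⟩ := h
  refine ⟨fun i => vs (k + n - i), fun i => es (k + n - (i + 1)), ?_, ?_, ?_, ?_⟩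
  · intro a b hab
    have := hinj hab
    omega
  · intro i
    constructor
    · rw [(hedge (k + n - (i + 1))).1]
      exact congrArg vs (by push_cast; ring)
    · rw [(hedge (k + n - (i + 1))).2]
      exact congrArg vs (by push_cast; ring)
  · intro i
    dsimp only
    have h1 : (k + (n : ℤ)) - ((n - (i : ℕ) : ℕ) : ℤ) = k + (i : ℕ) := by
      have := i.isLt
      omega
    rw [h1]
    exact hv i
  · intro i
    dsimp only
    have h1 : (k + (n : ℤ)) - (((n - 1 - (i : ℕ) : ℕ) : ℤ) + 1) = k + (i : ℕ) := by
      have := i.isLt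
      omega
    rw [h1]
    exact he i

lemma ssigmaFB_le_ssigmaF (hlf : G.LocallyFinite) (n : ℕ) : G.ssigmaFB n ≤ G.ssigmaF n :=
  iSup_mono (fun v => Nat.cast_le.mpr
    (card_mono_pred hlf _ _ (fun w (h : G.IsDblExt w) => h.isFwdExt)))

lemma ssigmaFB_le_ssigmaB (hlf : G.LocallyFinite) (n : ℕ) : G.ssigmaFB n ≤ G.ssigmaB n :=
  iSup_mono (fun v => Nat.cast_le.mpr
    (card_mono_pred hlf _ _ (fun w (h : G.IsDblExt w) => h.isBwdExt)))

lemma ssigmaF_le_ssigma (hlf : G.LocallyFinite) (n : ℕ) : G.ssigmaF n ≤ G.ssigma n := by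
  apply iSup_mono
  intro v
  haveI := finite_SAW hlf n v
  exact Nat.cast_le.mpr (Nat.card_le_card_of_injective _ Subtype.val_injective)

lemma ssigmaB_le_ssigma (hlf : G.LocallyFinite) (n : ℕ) : G.ssigmaB n ≤ G.ssigma n := by
  apply iSup_mono
  intro v
  haveI := finite_SAW hlf n v
  exact Nat.cast_le.mpr (Nat.card_le_card_of_injective _ Subtype.val_injective)

lemma ssigmaFB_le_ssigma (hlf : G.LocallyFinite) (n : ℕ) : G.ssigmaFB n ≤ G.ssigma n :=
  (ssigmaFB_le_ssigmaF hlf n).trans (ssigmaF_le_ssigma hlf n)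

end Dgraph
namespace Dgraph

variable {G : Dgraph}

lemma ssigma_pow_bound (hlf : G.LocallyFinite) (hqt : G.QuasiTransitive)
    (n : ℕ) (hn : 1 ≤ n) :
    ∃ M : ℕ, ∀ k : ℕ, 2*M ≤ k →
      G.ssigma (n*k) ≤ (G.ssigma n)^(2*M) * (G.ssigmaFB n)^(k - 2*M) := by
  classical
  obtain ⟨M, hM⟩ := Tbar_le_ssigmaFB hlf hqt n
  refine ⟨M, fun k hk => ?_⟩
  refine (ssigma_le_prod hlf n k).trans ?_
  set s := Finset.Ico M (k - M) with hs
  have hsub : s ⊆ Finset.range k := by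
    intro i hi
    simp only [hs, Finset.mem_Ico] at hi
    simp only [Finset.mem_range]
    omega
  have hfac : ∀ i ∈ Finset.range k, G.Tbar (n*i) (n*(k-1-i)) n ≤
      (if i ∈ s then G.ssigmaFB n else G.ssigma n) := by
    intro i hir
    simp only [Finset.mem_range] at hir
    by_cases hi : i ∈ s
    · rw [if_pos hi]
      simp only [hs, Finset.mem_Ico] at hi
      refine hM (n*i) (n*(k-1-i)) ?_ ?_
      · calc M ≤ i := hi.1
          _ ≤ n*i := Nat.le_mul_of_pos_left i (by omega)
      · calc M ≤ k-1-i := by omega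
          _ ≤ n*(k-1-i) := Nat.le_mul_of_pos_left _ (by omega)
    · rw [if_neg hi]
      exact Tbar_le_ssigma hlf _ _ n
  refine (Finset.prod_le_prod' hfac).trans (le_of_eq ?_)
  rw [← Finset.prod_sdiff hsub]
  have h1 : (∏ i ∈ s, if i ∈ s then G.ssigmaFB n else G.ssigma n) =
      (G.ssigmaFB n)^(s.card) := by
    rw [Finset.prod_congr rfl (fun i hi => if_pos hi), Finset.prod_const]
  have h2 : (∏ i ∈ (Finset.range k \ s), if i ∈ s then G.ssigmaFB n else G.ssigma n) =
      (G.ssigma n)^((Finset.range k \ s).card) := by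
    rw [Finset.prod_congr rfl (fun i hi => if_neg (Finset.mem_sdiff.mp hi).2),
      Finset.prod_const]
  rw [h1, h2]
  have hcard1 : s.card = k - 2*M := by
    rw [hs, Nat.card_Ico]
    omega
  have hcard2 : (Finset.range k \ s).card = 2*M := by
    rw [Finset.card_sdiff_of_subset hsub, Finset.card_range, hcard1]
    omega
  rw [hcard1, hcard2]

end Dgraph
attribute [local instance] Classical.propDecidable


open Filter ENNReal

/-- for an infinite, locally finite, strongly connected, quasi-transitive,
unimodular directed graph, `μ = μ^F = μ^B = μ^{FB}`. -/
theorem connective_constants_coincide_unimodular (G : Dgraph) (hinf : Infinite G.V)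
    (hlf : G.LocallyFinite) (hsc : G.StronglyConnected) (hqt : G.QuasiTransitive)
    (huni : G.Unimodular) :
    ∃ μ μF μB μFB : ℝ≥0∞,
      Tendsto (fun n : ℕ => (G.ssigma n) ^ (1 / (n : ℝ))) atTop (nhds μ) ∧
      Tendsto (fun n : ℕ => (G.ssigmaF n) ^ (1 / (n : ℝ))) atTop (nhds μF) ∧
      Tendsto (fun n : ℕ => (G.ssigmaB n) ^ (1 / (n : ℝ))) atTop (nhds μB) ∧
      Tendsto (fun n : ℕ => (G.ssigmaFB n) ^ (1 / (n : ℝ))) atTop (nhds μFB) ∧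
      μ = μF ∧ μ = μB ∧ μ = μFB := by
  classical
  haveI := hinf
  obtain ⟨D, hD⟩ := Dgraph.exists_degree_bound hlf hqt
  have h1 : ∀ n : ℕ, 1 ≤ G.ssigma n := Dgraph.one_le_ssigma hinf hlf hsc
  have h2 : ∀ n : ℕ, G.ssigma n ≤ (D : ℝ≥0∞)^n := fun n =>
    iSup_le (fun v => Dgraph.sigma_le_pow hlf hD n v)
  have hfin : ∀ n : ℕ, G.ssigma n ≠ ⊤ := fun n =>
    ne_top_of_le_ne_top (ENNReal.pow_ne_top (ENNReal.natCast_ne_top D)) (h2 n)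
  have htR1 : ∀ n : ℕ, 1 ≤ (G.ssigma n).toReal := by
    intro n
    rw [← ENNReal.toReal_one]
    exact ENNReal.toReal_mono (hfin n) (h1 n)
  set u : ℕ → ℝ := fun n => Real.log ((G.ssigma n).toReal) with hu
  have hu0 : ∀ n, 0 ≤ u n := fun n => Real.log_nonneg (htR1 n)
  have hsub : Subadditive u := by
    intro m k
    have hle : (G.ssigma (m + k)).toReal ≤ (G.ssigma m).toReal * (G.ssigma k).toReal := by
      rw [← ENNReal.toReal_mul]
      exact ENNReal.toReal_mono (ENNReal.mul_ne_top (hfin m) (hfin k))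
        (Dgraph.ssigma_submul hlf m k)
    calc u (m+k) ≤ Real.log ((G.ssigma m).toReal * (G.ssigma k).toReal) :=
          Real.log_le_log (by linarith [htR1 (m+k)]) hle
      _ = u m + u k := Real.log_mul (by linarith [htR1 m]) (by linarith [htR1 k])
  have hbdd : BddBelow (Set.range fun n : ℕ => u n / n) := by
    refine ⟨0, ?_⟩
    rintro x ⟨n, rfl⟩
    exact div_nonneg (hu0 n) (Nat.cast_nonneg n)
  have hlim := hsub.tendsto_lim hbdd
  set L := hsub.lim with hL
  have hrepr : ∀ X : ℝ≥0∞, X ≠ ⊤ → 1 ≤ X → ∀ n : ℕ, 1 ≤ n →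
      X ^ (1/(n:ℝ)) = ENNReal.ofReal (Real.exp (Real.log X.toReal / n)) := by
    intro X hX h1X n hn
    have hpos : 0 < X.toReal := by
      have h3 : (1:ℝ) ≤ X.toReal := by
        rw [← ENNReal.toReal_one]; exact ENNReal.toReal_mono hX h1X
      linarith
    conv_lhs => rw [← ENNReal.ofReal_toReal hX]
    rw [ENNReal.ofReal_rpow_of_pos hpos, Real.rpow_def_of_pos hpos, mul_one_div]
  have hmainaux : Tendsto (fun n : ℕ => ENNReal.ofReal (Real.exp (u n / n))) atTop
      (nhds (ENNReal.ofReal (Real.exp L))) :=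
    (ENNReal.continuous_ofReal.tendsto _).comp ((Real.continuous_exp.tendsto _).comp hlim)
  have hmain : Tendsto (fun n : ℕ => G.ssigma n ^ (1/(n:ℝ))) atTop
      (nhds (ENNReal.ofReal (Real.exp L))) := by
    apply hmainaux.congr'
    filter_upwards [Filter.eventually_ge_atTop 1] with n hn
    exact (hrepr _ (hfin n) (h1 n) n hn).symm
  set μ := ENNReal.ofReal (Real.exp L) with hμ
  have hlow : ∀ n : ℕ, 1 ≤ n → μ ≤ (G.ssigmaFB n) ^ (1/(n:ℝ)) := by
    intro n hn
    obtain ⟨M, hM⟩ := Dgraph.ssigma_pow_bound hlf hqt n hn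
    set b := G.ssigmaFB n with hb
    have hbfin : b ≠ ⊤ := ne_top_of_le_ne_top (hfin n) (Dgraph.ssigmaFB_le_ssigma hlf n)
    have hb1 : 1 ≤ b := by
      by_contra hcon
      have hb0 : b = 0 := by
        have hall : ∀ v : G.V, (G.sigmaFB n v : ℝ≥0∞) = 0 := by
          intro v
          by_contra hv
          apply hcon
          have hcv : G.sigmaFB n v ≠ 0 := by
            intro h0
            exact hv (by rw [h0]; simp)
          have h1v : (1:ℝ≥0∞) ≤ (G.sigmaFB n v : ℝ≥0∞) := by
            exact_mod_cast Nat.one_le_cast.mpr (Nat.pos_of_ne_zero hcv)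
          exact h1v.trans (le_iSup (fun v => (G.sigmaFB n v : ℝ≥0∞)) v)
        rw [hb, Dgraph.ssigmaFB]
        exact iSup_eq_zero.mpr hall
      have hcontr := hM (2*M+1) (by omega)
      rw [hb0, show (2*M+1) - 2*M = 1 from by omega, pow_one, mul_zero] at hcontr
      have h4 := h1 (n*(2*M+1))
      have : (1:ℝ≥0∞) ≤ 0 := h4.trans hcontr
      simp at this
    have hbR1 : (1:ℝ) ≤ b.toReal := by
      rw [← ENNReal.toReal_one]; exact ENNReal.toReal_mono hbfin hb1
    have hlb0 : 0 ≤ Real.log b.toReal := Real.log_nonneg hbR1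
    have hoL : L ≤ Real.log b.toReal / n := by
      have hmulT : Tendsto (fun k : ℕ => n * k) atTop atTop :=
        tendsto_atTop_mono (fun k => Nat.le_mul_of_pos_left k (by omega : 0 < n)) tendsto_id
      have hcomp : Tendsto (fun k : ℕ => u (n*k) / ((n*k : ℕ):ℝ)) atTop (nhds L) :=
        hlim.comp hmulT
      have hgk : Tendsto (fun k : ℕ => (2*M : ℝ) * u n / ((n*k : ℕ):ℝ) +
          Real.log b.toReal / n) atTop (nhds (0 + Real.log b.toReal / n)) := by
        refine Tendsto.add ?_ tendsto_const_nhds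
        exact (tendsto_const_div_atTop_nhds_zero_nat ((2*M : ℝ) * u n)).comp hmulT
      rw [zero_add] at hgk
      refine le_of_tendsto_of_tendsto hcomp hgk ?_
      filter_upwards [Filter.eventually_ge_atTop (2*M+1)] with k hk
      have hnk0 : 0 < n*k := Nat.mul_pos (by omega) (by omega)
      have hknz : (0:ℝ) < ((n*k : ℕ):ℝ) := by exact_mod_cast hnk0
      have hXle : (G.ssigma (n*k)).toReal ≤ (G.ssigma n).toReal^(2*M) * b.toReal^(k - 2*M) := by
        rw [← ENNReal.toReal_pow, ← ENNReal.toReal_pow, ← ENNReal.toReal_mul]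
        exact ENNReal.toReal_mono
          (ENNReal.mul_ne_top (ENNReal.pow_ne_top (hfin n)) (ENNReal.pow_ne_top hbfin))
          (hM k (by omega))
      have hlogle : u (n*k) ≤ (2*M : ℝ) * u n + ((k - 2*M : ℕ) : ℝ) * Real.log b.toReal := by
        calc u (n*k) ≤ Real.log ((G.ssigma n).toReal^(2*M) * b.toReal^(k-2*M)) :=
              Real.log_le_log (by linarith [htR1 (n*k)]) hXle
          _ = (2*M : ℝ) * u n + ((k - 2*M : ℕ) : ℝ) * Real.log b.toReal := by
              rw [Real.log_mul (pow_ne_zero _ (by linarith [htR1 n]))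
                (pow_ne_zero _ (by linarith [hbR1])), Real.log_pow, Real.log_pow]
              push_cast
              ring
      have hstep2 : ((k - 2*M : ℕ):ℝ) * Real.log b.toReal / ((n*k:ℕ):ℝ) ≤
          Real.log b.toReal / n := by
        rw [div_le_div_iff₀ hknz (by exact_mod_cast Nat.cast_pos.mpr (show 0 < n by omega))]
        have h5 : ((k - 2*M : ℕ):ℝ) ≤ (k:ℝ) := by
          exact_mod_cast Nat.cast_le.mpr (show k - 2*M ≤ k by omega)
        calc ((k - 2*M:ℕ):ℝ) * Real.log b.toReal * n
            ≤ (k:ℝ) * Real.log b.toReal * n := by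
              apply mul_le_mul_of_nonneg_right (mul_le_mul_of_nonneg_right h5 hlb0)
              positivity
          _ = Real.log b.toReal * ((n*k:ℕ):ℝ) := by push_cast; ring
      calc u (n*k) / ((n*k:ℕ):ℝ)
          ≤ ((2*M : ℝ) * u n + ((k - 2*M : ℕ):ℝ) * Real.log b.toReal) / ((n*k:ℕ):ℝ) :=
            (div_le_div_iff_of_pos_right hknz).mpr hlogle
        _ = (2*M : ℝ) * u n / ((n*k:ℕ):ℝ) +
            ((k - 2*M : ℕ):ℝ) * Real.log b.toReal / ((n*k:ℕ):ℝ) := by ring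
        _ ≤ (2*M : ℝ) * u n / ((n*k:ℕ):ℝ) + Real.log b.toReal / n := by linarith [hstep2]
    rw [hrepr b hbfin hb1 n hn]
    exact ENNReal.ofReal_le_ofReal (Real.exp_le_exp.mpr hoL)
  have hsq : ∀ (f : ℕ → ℝ≥0∞), (∀ n : ℕ, 1 ≤ n → G.ssigmaFB n ≤ f n) →
      (∀ n : ℕ, f n ≤ G.ssigma n) →
      Tendsto (fun n : ℕ => f n ^ (1/(n:ℝ))) atTop (nhds μ) := by
    intro f hfb hfa
    refine tendsto_of_tendsto_of_tendsto_of_le_of_le' (g := fun _ : ℕ => μ)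
      (h := fun n : ℕ => G.ssigma n ^ (1/(n:ℝ))) tendsto_const_nhds hmain ?_ ?_
    · filter_upwards [Filter.eventually_ge_atTop 1] with n hn
      exact le_trans (hlow n hn) (ENNReal.rpow_le_rpow (hfb n hn) (by positivity))
    · refine Filter.Eventually.of_forall (fun n => ?_)
      exact ENNReal.rpow_le_rpow (hfa n) (by positivity)
  refine ⟨μ, μ, μ, μ, hmain, ?_, ?_, ?_, rfl, rfl, rfl⟩
  · exact hsq _ (fun n _ => Dgraph.ssigmaFB_le_ssigmaF hlf n)
      (fun n => Dgraph.ssigmaF_le_ssigma hlf n)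
  · exact hsq _ (fun n _ => Dgraph.ssigmaFB_le_ssigmaB hlf n)
      (fun n => Dgraph.ssigmaB_le_ssigma hlf n)
  · exact hsq _ (fun n _ => le_rfl) (fun n => Dgraph.ssigmaFB_le_ssigma hlf n)
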